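/- arXiv:2509.06962 — 2 statements merged into one kernel-verified Lean document; each statement's English description precedes it below -/
import Mathlib

section
/- Let (X, F) be a Menger probabilistic metric space with t-norm min and let {x_n} be a sequence such that for some δ ∈ (0,1) and all n ≥ 1, t > 0: F_{x_n, x_{n+1}}(t) ≥ F_{x_0, x_1}(t/δ^n). Assume additionally that lim_{t→∞} F_{x_0,x_1}(t) = 1. Then {x_n} is a Cauchy sequence, i.e. for every ε > 0 there exists N such that F_{x_m, x_n}(ε) > 1 − ε for all m, n ≥ N. -/
open Filter

/-- A Menger probabilistic metric space with the t-norm `min`.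
`F x y` is the distribution function of the distance between `x` and `y`. -/
structure MengerMin (X : Type*) where
  F : X → X → ℝ → ℝ
  nonneg : ∀ x y t, 0 ≤ F x y t
  le_one : ∀ x y t, F x y t ≤ 1
  mono : ∀ x y, Monotone (F x y)
  left_cont : ∀ x y t, Tendsto (F x y) (nhdsWithin t (Set.Iio t)) (nhds (F x y t))
  zero_of_nonpos : ∀ x y t, t ≤ 0 → F x y t = 0
  tendsto_one : ∀ x y, Tendsto (F x y) atTop (nhds 1)
  eq_iff : ∀ x y, (∀ t : ℝ, 0 < t → F x y t = 1) ↔ x = y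
  symm : ∀ x y t, F x y t = F y x t
  triangle : ∀ x y z t s, 0 < t → 0 < s → min (F x y t) (F y z s) ≤ F x z (t + s)

namespace MengerMin

variable {X : Type*}

/-- τ-convergence of a sequence. -/
def TauConv (M : MengerMin X) (x : ℕ → X) (a : X) : Prop :=
  ∀ ε : ℝ, 0 < ε → ∃ N : ℕ, ∀ n ≥ N, 1 - ε < M.F (x n) a ε

/-- Cauchy sequence in the probabilistic sense. -/
def IsCauchySeq (M : MengerMin X) (x : ℕ → X) : Prop :=
  ∀ ε : ℝ, 0 < ε → ∃ N : ℕ, ∀ m ≥ N, ∀ n ≥ N, 1 - ε < M.F (x m) (x n) ε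

/-- Completeness: every Cauchy sequence τ-converges. -/
def Complete (M : MengerMin X) : Prop :=
  ∀ x : ℕ → X, M.IsCauchySeq x → ∃ a : X, M.TauConv x a

/-- Kannan-type probabilistic contraction with constant `α`. -/
def Kannan (M : MengerMin X) (S : X → X) (α : ℝ) : Prop :=
  ∀ x y : X, ∀ t : ℝ, 0 < t →
    min (M.F x (S x) (t / (2 * α))) (M.F y (S y) (t / (2 * α))) ≤ M.F (S x) (S y) t

/-- Chatterjea-type probabilistic contraction with constant `α`. -/
def Chatterjea (M : MengerMin X) (S : X → X) (α : ℝ) : Prop :=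
  ∀ x y : X, ∀ t : ℝ, 0 < t →
    min (M.F x (S y) (t / (2 * α))) (M.F y (S x) (t / (2 * α))) ≤ M.F (S x) (S y) t

end MengerMin

theorem cauchy_of_geometric_bound {X : Type*} (M : MengerMin X) (x : ℕ → X)
    (δ : ℝ) (hδ0 : 0 < δ) (hδ1 : δ < 1)
    (h : ∀ n : ℕ, 1 ≤ n → ∀ t : ℝ, 0 < t →
      M.F (x 0) (x 1) (t / δ ^ n) ≤ M.F (x n) (x (n + 1)) t)
    (hlim : Filter.Tendsto (M.F (x 0) (x 1)) Filter.atTop (nhds 1)) :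
    M.IsCauchySeq x := by
  intro ε hε
  have hδne : δ ^ 0 = (1:ℝ) := pow_zero δ
  have hδpow : ∀ m : ℕ, 0 < δ ^ m := fun m => pow_pos hδ0 m
  -- step bound for all k (including 0)
  have hstep : ∀ k : ℕ, ∀ t : ℝ, 0 < t →
      M.F (x 0) (x 1) (t / δ ^ k) ≤ M.F (x k) (x (k + 1)) t := by
    intro k t ht
    cases k with
    | zero => simp
    | succ k => exact h (k+1) (Nat.succ_le_succ (Nat.zero_le k)) t ht
  -- chain bound
  have key : ∀ j m : ℕ, ∀ c : ℝ, 0 < c →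
      M.F (x 0) (x 1) (c / δ ^ m) ≤
        M.F (x m) (x (m + j + 1)) (c * ∑ i ∈ Finset.range (j + 1), δ ^ i) := by
    intro j
    induction j with
    | zero =>
      intro m c hc
      simpa using hstep m c hc
    | succ j ih =>
      intro m c hc
      have hs : 0 < c * δ * ∑ i ∈ Finset.range (j + 1), δ ^ i := by
        have : 0 < ∑ i ∈ Finset.range (j + 1), δ ^ i :=
          Finset.sum_pos (fun i _ => hδpow i) ⟨0, Finset.mem_range.2 (Nat.succ_pos j)⟩
        positivity
      have h1 : M.F (x 0) (x 1) (c / δ ^ m) ≤ M.F (x m) (x (m + 1)) c := hstep m c hc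
      have h2 : M.F (x 0) (x 1) (c / δ ^ m) ≤
          M.F (x (m + 1)) (x (m + 1 + j + 1)) (c * δ * ∑ i ∈ Finset.range (j + 1), δ ^ i) := by
        have := ih (m + 1) (c * δ) (by positivity)
        have heq : c * δ / δ ^ (m + 1) = c / δ ^ m := by
          rw [pow_succ]
          field_simp
        rw [heq] at this
        exact this
      have htri := M.triangle (x m) (x (m + 1)) (x (m + 1 + j + 1)) c
        (c * δ * ∑ i ∈ Finset.range (j + 1), δ ^ i) hc hs
      have hsum : c + c * δ * ∑ i ∈ Finset.range (j + 1), δ ^ i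
          = c * ∑ i ∈ Finset.range (j + 2), δ ^ i := by
        rw [show (∑ i ∈ Finset.range (j + 2), δ ^ i)
            = δ * ∑ i ∈ Finset.range (j + 1), δ ^ i + 1 from geom_sum_succ]
        ring
      have hidx : m + 1 + j + 1 = m + (j + 1) + 1 := by ring
      calc M.F (x 0) (x 1) (c / δ ^ m) ≤ _ := le_min h1 h2
        _ ≤ M.F (x m) (x (m + 1 + j + 1)) (c + c * δ * ∑ i ∈ Finset.range (j + 1), δ ^ i) := htri
        _ = _ := by rw [hsum, hidx]
  -- bound for m < n
  have hbound : ∀ m n : ℕ, m < n →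
      M.F (x 0) (x 1) (ε * (1 - δ) / δ ^ m) ≤ M.F (x m) (x n) ε := by
    intro m n hmn
    obtain ⟨j, rfl⟩ : ∃ j, n = m + j + 1 := ⟨n - m - 1, by omega⟩
    have hc : 0 < ε * (1 - δ) := by nlinarith
    have h1 := key j m (ε * (1 - δ)) hc
    have hsle : ε * (1 - δ) * ∑ i ∈ Finset.range (j + 1), δ ^ i ≤ ε := by
      have hg := geom_sum_mul δ (j + 1)
      nlinarith [mul_pos hε (hδpow (j + 1))]
    exact h1.trans (M.mono _ _ hsle)
  -- choose N
  have h1lt : (1:ℝ) - ε < 1 := by linarith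
  obtain ⟨T, hT⟩ := Filter.eventually_atTop.1 (hlim.eventually (eventually_gt_nhds h1lt))
  set T' : ℝ := max T 1 with hT'
  have hT'pos : 0 < T' := lt_of_lt_of_le one_pos (le_max_right _ _)
  have hc : 0 < ε * (1 - δ) := by nlinarith
  obtain ⟨N, hN⟩ := exists_pow_lt_of_lt_one (div_pos hc hT'pos) hδ1
  have hNb : ∀ m : ℕ, N ≤ m → T ≤ ε * (1 - δ) / δ ^ m := by
    intro m hm
    have hpm : δ ^ m ≤ δ ^ N := pow_le_pow_of_le_one hδ0.le hδ1.le hm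
    have h2 : δ ^ m < ε * (1 - δ) / T' := lt_of_le_of_lt hpm hN
    have : T' < ε * (1 - δ) / δ ^ m := by
      rw [lt_div_iff₀ (hδpow m)]
      rw [lt_div_iff₀ hT'pos] at h2
      nlinarith [hδpow m, hT'pos]
    exact le_of_lt (lt_of_le_of_lt (le_max_left _ _) this)
  refine ⟨N, fun m hm n hn => ?_⟩
  rcases lt_trichotomy m n with hmn | hmn | hmn
  · exact lt_of_lt_of_le (hT _ (hNb m hm)) (hbound m n hmn)
  · subst hmn
    have := (M.eq_iff (x m) (x m)).2 rfl ε hε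
    rw [this]; linarith
  · rw [M.symm]
    exact lt_of_lt_of_le (hT _ (hNb n hn)) (hbound n m hmn)
end

section
/- Let (X, F) be a Menger probabilistic metric space with t-norm min and S : X → X a Kannan-type probabilistic contraction with constant α ∈ (0,1/2). Suppose the Picard sequence x_{n+1} = S x_n τ-converges to x* and F_{x_n, x_{n+1}}(t) → 1 for every t > 0. Then for every t > 0, F_{S x*, x*}(t) ≥ F_{x*, S x*}(t/(4α)), and consequently S x* = x*. -/
open Filter

theorem kannan_limit_is_fixed {X : Type*} (M : MengerMin X)
    (S : X → X) (α : ℝ) (hα0 : 0 < α) (hα : α < 1 / 2) (hK : M.Kannan S α)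
    (x : ℕ → X) (hx : ∀ n : ℕ, x (n + 1) = S (x n))
    (a : X) (hconv : M.TauConv x a)
    (hsmall : ∀ t : ℝ, 0 < t →
      Filter.Tendsto (fun n => M.F (x n) (x (n + 1)) t) Filter.atTop (nhds 1)) :
    (∀ t : ℝ, 0 < t → M.F a (S a) (t / (4 * α)) ≤ M.F (S a) a t) ∧ S a = a := by
  have hα2 : (0:ℝ) < 2 * α := by positivity
  -- Key step: for 0 < u < t, F (Sa) a (u/(2α)) ≤ F (Sa) a t
  have key : ∀ t u : ℝ, 0 < u → u < t →
      M.F (S a) a (u / (2 * α)) ≤ M.F (S a) a t := by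
    intro t u hu hut
    set c := M.F (S a) a (u / (2 * α)) with hc
    have hc1 : c ≤ 1 := M.le_one _ _ _
    have hstep : ∀ ε : ℝ, 0 < ε → min c (1 - ε) ≤ M.F (S a) a t := by
      intro ε hε
      set δ := min ε (t - u) with hδdef
      have hδ : 0 < δ := lt_min hε (by linarith)
      have hu2 : 0 < u / (2 * α) := by positivity
      have h1 : ∀ᶠ n in atTop, 1 - ε < M.F (x n) (x (n + 1)) (u / (2 * α)) :=
        (hsmall _ hu2).eventually (eventually_gt_nhds (by linarith))
      obtain ⟨N1, hN1⟩ := Filter.eventually_atTop.mp h1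
      obtain ⟨N2, hN2⟩ := hconv δ hδ
      set n := max N1 N2 with hn
      have hn1 : 1 - ε < M.F (x n) (x (n + 1)) (u / (2 * α)) := hN1 n (le_max_left _ _)
      have hn2' : 1 - δ < M.F (x (n + 1)) a δ :=
        hN2 (n + 1) (le_trans (le_max_right _ _) (Nat.le_succ n))
      -- Kannan contraction bound
      have hKan := hK a (x n) u hu
      rw [← hx n] at hKan
      have hcsymm : M.F a (S a) (u / (2 * α)) = c := by rw [hc, M.symm]
      have hA : min c (1 - ε) ≤ M.F (S a) (x (n + 1)) u := by
        refine le_trans (le_min ?_ ?_) hKan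
        · exact le_trans (min_le_left _ _) (le_of_eq hcsymm.symm)
        · exact le_trans (min_le_right _ _) hn1.le
      have hB : min c (1 - ε) ≤ M.F (x (n + 1)) a (t - u) := by
        have h1 : M.F (x (n + 1)) a δ ≤ M.F (x (n + 1)) a (t - u) :=
          M.mono _ _ (min_le_right ε (t - u))
        have h2 : 1 - ε ≤ 1 - δ := by
          have : δ ≤ ε := min_le_left _ _
          linarith
        exact le_trans (min_le_right _ _) (by linarith)
      have htri := M.triangle (S a) (x (n + 1)) a u (t - u) hu (by linarith)
      have : u + (t - u) = t := by ring
      rw [this] at htri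
      exact le_trans (le_min hA hB) htri
    -- Let ε → 0⁺
    have hlim : Tendsto (fun ε : ℝ => min c (1 - ε)) (nhdsWithin 0 (Set.Ioi 0))
        (nhds (min c 1)) := by
      have : Tendsto (fun ε : ℝ => min c (1 - ε)) (nhds 0) (nhds (min c (1 - 0))) := by
        exact (tendsto_const_nhds.min ((tendsto_const_nhds).sub tendsto_id))
      simpa using this.mono_left nhdsWithin_le_nhds
    rw [min_eq_left hc1] at hlim
    refine le_of_tendsto hlim ?_
    filter_upwards [self_mem_nhdsWithin] with ε (hε : ε ∈ Set.Ioi 0)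
    exact hstep ε hε
  constructor
  · intro t ht
    have h := key t (t / 2) (by positivity) (by linarith)
    have he : t / 2 / (2 * α) = t / (4 * α) := by
      rw [div_div]; congr 1; ring
    rw [he] at h
    rw [M.symm]
    exact h
  · -- fixed point
    rw [← (M.eq_iff (S a) a)]
    intro t ht
    have hr : 1 < 1 / (2 * α) := by
      rw [lt_div_iff₀ hα2]; linarith
    set r := 1 / (2 * α) with hrdef
    have grow : ∀ k : ℕ, ∀ s : ℝ, s < t * r ^ k → M.F (S a) a s ≤ M.F (S a) a t := by
      intro k
      induction k with
      | zero => intro s hs; exact M.mono _ _ (by simpa using hs.le)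
      | succ k ih =>
        intro s hs
        rcases le_or_gt s 0 with hs0 | hs0
        · rw [M.zero_of_nonpos _ _ _ hs0]; exact M.nonneg _ _ _
        · have hαr : 2 * α * r = 1 := by
            rw [hrdef]; field_simp
          have h2as : 2 * α * s < t * r ^ k := by
            have := mul_lt_mul_of_pos_left hs hα2
            calc 2 * α * s < 2 * α * (t * r ^ (k + 1)) := this
              _ = (2 * α * r) * (t * r ^ k) := by ring
              _ = t * r ^ k := by rw [hαr]; ring
          set s' := (2 * α * s + t * r ^ k) / 2 with hs'
          have hs'1 : 2 * α * s < s' := by rw [hs']; linarith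
          have hs'2 : s' < t * r ^ k := by rw [hs']; linarith
          set u := (2 * α * s + s') / 2 with hu
          have hu0 : 0 < u := by
            have : 0 < 2 * α * s := by positivity
            rw [hu]; linarith
          have hus' : u < s' := by rw [hu]; linarith
          have hsu : s ≤ u / (2 * α) := by
            rw [le_div_iff₀ hα2]
            have : 2 * α * s < u := by rw [hu]; linarith
            linarith [this]
          calc M.F (S a) a s ≤ M.F (S a) a (u / (2 * α)) := M.mono _ _ hsu
            _ ≤ M.F (S a) a s' := key s' u hu0 hus'
            _ ≤ M.F (S a) a t := ih s' hs'2
    have hall : ∀ s : ℝ, M.F (S a) a s ≤ M.F (S a) a t := by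
      intro s
      obtain ⟨k, hk⟩ := pow_unbounded_of_one_lt (s / t) hr
      have : s < t * r ^ k := by
        rw [div_lt_iff₀ ht] at hk; linarith
      exact grow k s this
    have h1 : (1:ℝ) ≤ M.F (S a) a t :=
      le_of_tendsto' (M.tendsto_one (S a) a) hall
    exact le_antisymm (M.le_one _ _ _) h1
end
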